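/- arXiv:1110.1814 — 2 statements merged into one kernel-verified Lean document; each statement's English description precedes it below -/
import Mathlib

section
/- Let A be a self-adjoint positive operator with compact inverse on a Hilbert space H, with smallest eigenvalue λ₁ > 0, and let h, α > 0. Consider the abstract damped plate equation n_tt + (A + h²A²) n + α n_t = 0. Then the associated semigroup T_t on H_σ × H_{2+σ} (where H_s = D(A^{s/2})) is exponentially stable: there exist M, ω > 0 with ‖T_t w‖ ≤ M e^{-ωt} ‖w‖ for all w ∈ H_σ × H_{2+σ} and t ≥ 0. -/
open Filter

lemma mode_decay (c α ε ω : ℝ) (hc : 0 < c) (hα : 0 < α) (hε : 0 < ε)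
    (hε1 : ε ≤ α / 4) (hε2 : ε * α ≤ c) (hε3 : 4 * ε ^ 2 ≤ c)
    (hω : 0 < ω) (hω1 : 3 * ω ≤ ε) (hω2 : 6 * ω ≤ α)
    (x y : ℝ → ℝ) (hy : ∀ t, HasDerivAt y (x t) t)
    (hx : ∀ t, HasDerivAt x (-(c * y t + α * x t)) t) :
    ∀ t, 0 ≤ t →
      x t ^ 2 + c * y t ^ 2 ≤ 3 * Real.exp (-2 * ω * t) * (x 0 ^ 2 + c * y 0 ^ 2) := by
  set L : ℝ → ℝ := fun t => x t ^ 2 + c * y t ^ 2 + 2 * ε * (y t * x t) with hLdef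
  have hL : ∀ t, HasDerivAt L (2 * x t * (-(c * y t + α * x t)) + c * (2 * y t * x t)
      + 2 * ε * (x t * x t + y t * (-(c * y t + α * x t)))) t := by
    intro t
    have h1 : HasDerivAt (fun s => x s ^ 2) (2 * x t * (-(c * y t + α * x t))) t := by
      have := (hx t).fun_pow 2
      simpa [mul_comm, mul_assoc, mul_left_comm] using this
    have h2 : HasDerivAt (fun s => c * y s ^ 2) (c * (2 * y t * x t)) t := by
      have := ((hy t).pow 2).const_mul c
      simpa [mul_comm, mul_assoc, mul_left_comm] using this
    have h3 : HasDerivAt (fun s => 2 * ε * (y s * x s))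
        (2 * ε * (x t * x t + y t * (-(c * y t + α * x t)))) t :=
      ((hy t).mul (hx t)).const_mul (2 * ε)
    exact (h1.add h2).add h3
  set g : ℝ → ℝ := fun t => Real.exp (2 * ω * t) * L t with hgdef
  have hg : ∀ t, HasDerivAt g (Real.exp (2 * ω * t) * (2 * ω) * L t
      + Real.exp (2 * ω * t) * (2 * x t * (-(c * y t + α * x t)) + c * (2 * y t * x t)
      + 2 * ε * (x t * x t + y t * (-(c * y t + α * x t))))) t := by
    intro t
    have hexp : HasDerivAt (fun s => Real.exp (2 * ω * s)) (Real.exp (2 * ω * t) * (2 * ω)) t := by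
      have : HasDerivAt (fun s : ℝ => 2 * ω * s) (2 * ω) t := by
        simpa using (hasDerivAt_id t).const_mul (2 * ω)
      exact this.exp
    exact hexp.mul (hL t)
  have hanti : Antitone g := by
    apply antitone_of_deriv_nonpos
    · exact fun t => (hg t).differentiableAt
    · intro t
      rw [(hg t).deriv]
      have hep : (0:ℝ) < Real.exp (2 * ω * t) := Real.exp_pos _
      have key : 2 * ω * L t + (2 * x t * (-(c * y t + α * x t)) + c * (2 * y t * x t)
          + 2 * ε * (x t * x t + y t * (-(c * y t + α * x t)))) ≤ 0 := by
        simp only [hLdef]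
        nlinarith [mul_nonneg hω.le (sq_nonneg (x t - 2 * ε * y t)),
          mul_nonneg hα.le (sq_nonneg (x t + ε * y t)),
          mul_nonneg (mul_nonneg hω.le (sub_nonneg.2 hε3)) (sq_nonneg (y t)),
          mul_nonneg (mul_nonneg hε.le (sub_nonneg.2 hε2)) (sq_nonneg (y t)),
          sq_nonneg (x t), mul_nonneg hc.le (sq_nonneg (y t))]
      nlinarith [mul_le_mul_of_nonneg_left key hep.le]
  intro t ht
  have h1 : Real.exp (2 * ω * t) * L t ≤ L 0 := by
    have := hanti ht
    simpa [hgdef] using this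
  have hep : (0:ℝ) < Real.exp (2 * ω * t) := Real.exp_pos _
  have hen : (0:ℝ) < Real.exp (-2 * ω * t) := Real.exp_pos _
  have hprod : Real.exp (-2 * ω * t) * Real.exp (2 * ω * t) = 1 := by
    rw [← Real.exp_add]
    have : -2 * ω * t + 2 * ω * t = 0 := by ring
    rw [this, Real.exp_zero]
  have hEL : x t ^ 2 + c * y t ^ 2 ≤ 2 * L t := by
    simp only [hLdef]
    nlinarith [sq_nonneg (x t + 2 * ε * y t), mul_nonneg (sub_nonneg.2 hε3) (sq_nonneg (y t))]
  have hL0 : L 0 ≤ 3 / 2 * (x 0 ^ 2 + c * y 0 ^ 2) := by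
    simp only [hLdef]
    nlinarith [sq_nonneg (x 0 - 2 * ε * y 0), mul_nonneg (sub_nonneg.2 hε3) (sq_nonneg (y 0))]
  have hLt : L t ≤ Real.exp (-2 * ω * t) * L 0 := by
    have h2 := mul_le_mul_of_nonneg_left h1 hen.le
    calc L t = Real.exp (-2 * ω * t) * (Real.exp (2 * ω * t) * L t) := by
          rw [← mul_assoc, hprod, one_mul]
      _ ≤ Real.exp (-2 * ω * t) * L 0 := h2
  have hE0 : 0 ≤ x 0 ^ 2 + c * y 0 ^ 2 := by positivity
  have h3 : Real.exp (-2 * ω * t) * L 0 ≤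
      Real.exp (-2 * ω * t) * (3 / 2 * (x 0 ^ 2 + c * y 0 ^ 2)) :=
    mul_le_mul_of_nonneg_left hL0 hen.le
  calc x t ^ 2 + c * y t ^ 2 ≤ 2 * L t := hEL
    _ ≤ 2 * (Real.exp (-2 * ω * t) * L 0) := by linarith
    _ ≤ 2 * (Real.exp (-2 * ω * t) * (3 / 2 * (x 0 ^ 2 + c * y 0 ^ 2))) := by linarith
    _ = 3 * Real.exp (-2 * ω * t) * (x 0 ^ 2 + c * y 0 ^ 2) := by ring

lemma sandwich (m' K e p L2 c X1 Y1 X0 Y0 : ℝ) (hm'1 : 1 ≤ m') (hK1 : 1 ≤ K)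
    (hp : 0 < p) (hL2 : 0 < L2) (he : 0 < e) (hA : L2 ≤ m' * c) (hB : c ≤ K * L2)
    (hE : X1 ^ 2 + c * Y1 ^ 2 ≤ 3 * e * (X0 ^ 2 + c * Y0 ^ 2)) :
    p * X1 ^ 2 + L2 * p * Y1 ^ 2 ≤ 3 * m' * K * e * (p * X0 ^ 2 + L2 * p * Y0 ^ 2) := by
  have hm'0 : (0:ℝ) ≤ m' := by linarith
  have s3 : X0 ^ 2 + c * Y0 ^ 2 ≤ K * X0 ^ 2 + K * L2 * Y0 ^ 2 := by
    nlinarith [mul_nonneg (sub_nonneg.2 hK1) (sq_nonneg X0),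
      mul_nonneg (sub_nonneg.2 hB) (sq_nonneg Y0)]
  calc p * X1 ^ 2 + L2 * p * Y1 ^ 2
      ≤ m' * (p * (X1 ^ 2 + c * Y1 ^ 2)) := by
        nlinarith [mul_nonneg (sub_nonneg.2 hA) (mul_nonneg hp.le (sq_nonneg Y1)),
          mul_nonneg (sub_nonneg.2 hm'1) (mul_nonneg hp.le (sq_nonneg X1))]
    _ ≤ m' * (p * (3 * e * (X0 ^ 2 + c * Y0 ^ 2))) :=
        mul_le_mul_of_nonneg_left (mul_le_mul_of_nonneg_left hE hp.le) hm'0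
    _ ≤ m' * (p * (3 * e * (K * X0 ^ 2 + K * L2 * Y0 ^ 2))) := by
        apply mul_le_mul_of_nonneg_left _ hm'0
        apply mul_le_mul_of_nonneg_left _ hp.le
        apply mul_le_mul_of_nonneg_left s3 (by positivity)
    _ = 3 * m' * K * e * (p * X0 ^ 2 + L2 * p * Y0 ^ 2) := by ring

/-- Exponential stability of the semigroup of the abstract damped plate equation
`n_tt + (A + h²A²)n + α n_t = 0` on `H_σ × H_{2+σ}`, where the self-adjoint
positive operator `A` with compact inverse is realized by its eigenvalue
sequence `lam` (diagonal model), and `H_s = D(A^{s/2})` carries the norm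
`‖u‖_s² = ∑ lam k ^ s * (u k)²`. -/
theorem stmt4 (lam : ℕ → ℝ) (hlam : ∀ k, 0 < lam k) (hmono : Monotone lam)
    (hcompact : Tendsto lam atTop atTop)
    (σ h α : ℝ) (hh : 0 < h) (hα : 0 < α) :
    ∃ M > (0:ℝ), ∃ ω > (0:ℝ), ∀ (n n' : ℝ → ℕ → ℝ),
      (∀ k t, HasDerivAt (fun s => n s k) (n' t k) t) →
      (∀ k t, HasDerivAt (fun s => n' s k)
        (-((lam k + h ^ 2 * (lam k) ^ 2) * n t k + α * n' t k)) t) →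
      (∀ t, Summable (fun k => lam k ^ σ * (n' t k) ^ 2)) →
      (∀ t, Summable (fun k => lam k ^ (2 + σ) * (n t k) ^ 2)) →
      ∀ t, 0 ≤ t →
        (∑' k, lam k ^ σ * (n' t k) ^ 2) + (∑' k, lam k ^ (2 + σ) * (n t k) ^ 2) ≤
          M ^ 2 * Real.exp (-2 * ω * t) *
            ((∑' k, lam k ^ σ * (n' 0 k) ^ 2) + (∑' k, lam k ^ (2 + σ) * (n 0 k) ^ 2)) := by
  have hlam0 : 0 < lam 0 := hlam 0
  obtain ⟨c₀, hc₀, hc₀le⟩ : ∃ c₀ : ℝ, 0 < c₀ ∧ ∀ k, c₀ ≤ lam k + h ^ 2 * lam k ^ 2 := by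
    refine ⟨lam 0 + h ^ 2 * lam 0 ^ 2, by positivity, fun k => ?_⟩
    have hl0k : lam 0 ≤ lam k := hmono (Nat.zero_le k)
    nlinarith [mul_nonneg (sq_nonneg h) (mul_nonneg (sub_nonneg.2 hl0k)
      (add_pos (hlam k) hlam0).le)]
  obtain ⟨ε, hε, hε1, hε2'⟩ : ∃ ε : ℝ, 0 < ε ∧ ε ≤ α / 4 ∧ ε * α ≤ c₀ := by
    refine ⟨min (α / 4) (c₀ / α), lt_min (by positivity) (by positivity),
      min_le_left _ _, ?_⟩
    have h1 : min (α / 4) (c₀ / α) ≤ c₀ / α := min_le_right _ _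
    calc min (α / 4) (c₀ / α) * α ≤ c₀ / α * α :=
          mul_le_mul_of_nonneg_right h1 hα.le
      _ = c₀ := div_mul_cancel₀ c₀ (ne_of_gt hα)
  obtain ⟨ω, hω, hω1, hω2⟩ : ∃ ω : ℝ, 0 < ω ∧ 3 * ω ≤ ε ∧ 6 * ω ≤ α := by
    refine ⟨min (α / 6) (ε / 3), lt_min (by positivity) (by positivity), ?_, ?_⟩
    · have := min_le_right (α / 6) (ε / 3); linarith
    · have := min_le_left (α / 6) (ε / 3); linarith
  obtain ⟨m', hm'1, hm'2⟩ : ∃ m' : ℝ, 1 ≤ m' ∧ 1 ≤ h ^ 2 * m' := by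
    refine ⟨max 1 (1 / h ^ 2), le_max_left _ _, ?_⟩
    have h1 : 1 / h ^ 2 ≤ max 1 (1 / h ^ 2) := le_max_right _ _
    rw [div_le_iff₀ (by positivity : (0:ℝ) < h ^ 2)] at h1
    nlinarith
  obtain ⟨K, hK1, hK2⟩ : ∃ K : ℝ, 1 ≤ K ∧ 1 / lam 0 + h ^ 2 ≤ K :=
    ⟨max 1 (1 / lam 0 + h ^ 2), le_max_left _ _, le_max_right _ _⟩
  have hm'0 : (0:ℝ) ≤ m' := by linarith
  have hC : (0:ℝ) < 3 * m' * K := by nlinarith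
  refine ⟨Real.sqrt (3 * m' * K), Real.sqrt_pos.2 hC, ω, hω, ?_⟩
  intro n n' hd1 hd2 hs1 hs2 t ht
  rw [Real.sq_sqrt hC.le]
  have hen : (0:ℝ) < Real.exp (-2 * ω * t) := Real.exp_pos _
  have permode : ∀ k, lam k ^ σ * (n' t k) ^ 2 + lam k ^ (2 + σ) * (n t k) ^ 2 ≤
      3 * m' * K * Real.exp (-2 * ω * t) *
        (lam k ^ σ * (n' 0 k) ^ 2 + lam k ^ (2 + σ) * (n 0 k) ^ 2) := by
    intro k
    have hlk : 0 < lam k := hlam k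
    have hl0k : lam 0 ≤ lam k := hmono (Nat.zero_le k)
    have hc : 0 < lam k + h ^ 2 * lam k ^ 2 := by positivity
    have hcc₀ : c₀ ≤ lam k + h ^ 2 * lam k ^ 2 := hc₀le k
    have hε2 : ε * α ≤ lam k + h ^ 2 * lam k ^ 2 := le_trans hε2' hcc₀
    have hε3 : 4 * ε ^ 2 ≤ lam k + h ^ 2 * lam k ^ 2 := by nlinarith
    have hE : n' t k ^ 2 + (lam k + h ^ 2 * lam k ^ 2) * n t k ^ 2 ≤
        3 * Real.exp (-2 * ω * t) *
          (n' 0 k ^ 2 + (lam k + h ^ 2 * lam k ^ 2) * n 0 k ^ 2) := by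
      simpa using mode_decay (lam k + h ^ 2 * lam k ^ 2) α ε ω hc hα hε hε1 hε2 hε3
        hω hω1 hω2 (fun s => n' s k) (fun s => n s k) (fun s => hd1 k s)
        (fun s => by simpa using hd2 k s) t ht
    have hp : 0 < lam k ^ σ := Real.rpow_pos_of_pos hlk σ
    have hq : lam k ^ (2 + σ) = lam k ^ 2 * lam k ^ σ := by
      rw [Real.rpow_add hlk, Real.rpow_two]
    have hL2 : (0:ℝ) < lam k ^ 2 := by positivity
    have hA : lam k ^ 2 ≤ m' * (lam k + h ^ 2 * lam k ^ 2) := by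
      linarith [mul_nonneg (sub_nonneg.2 hm'2) hL2.le, mul_nonneg hm'0 hlk.le]
    have hB : lam k + h ^ 2 * lam k ^ 2 ≤ K * lam k ^ 2 := by
      have h2 : lam k * lam 0 ≤ lam k ^ 2 := by nlinarith
      have h3 : lam k ≤ 1 / lam 0 * lam k ^ 2 := by
        rw [div_mul_eq_mul_div, le_div_iff₀ hlam0, one_mul]; linarith
      linarith [mul_le_mul_of_nonneg_left hK2 hL2.le]
    rw [hq]
    exact sandwich m' K (Real.exp (-2 * ω * t)) (lam k ^ σ) (lam k ^ 2)
      (lam k + h ^ 2 * lam k ^ 2) (n' t k) (n t k) (n' 0 k) (n 0 k)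
      hm'1 hK1 hp hL2 hen hA hB hE
  have hsum0 : Summable (fun k => 3 * m' * K * Real.exp (-2 * ω * t) *
      (lam k ^ σ * (n' 0 k) ^ 2 + lam k ^ (2 + σ) * (n 0 k) ^ 2)) :=
    ((hs1 0).add (hs2 0)).mul_left _
  calc (∑' k, lam k ^ σ * (n' t k) ^ 2) + (∑' k, lam k ^ (2 + σ) * (n t k) ^ 2)
      = ∑' k, (lam k ^ σ * (n' t k) ^ 2 + lam k ^ (2 + σ) * (n t k) ^ 2) :=
        (Summable.tsum_add (hs1 t) (hs2 t)).symm
    _ ≤ ∑' k, 3 * m' * K * Real.exp (-2 * ω * t) *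
          (lam k ^ σ * (n' 0 k) ^ 2 + lam k ^ (2 + σ) * (n 0 k) ^ 2) :=
        ((hs1 t).add (hs2 t)).tsum_le_tsum permode hsum0
    _ = 3 * m' * K * Real.exp (-2 * ω * t) *
          ((∑' k, lam k ^ σ * (n' 0 k) ^ 2) + (∑' k, lam k ^ (2 + σ) * (n 0 k) ^ 2)) := by
        rw [tsum_mul_left, Summable.tsum_add (hs1 0) (hs2 0)]
end

section
/- Let A be the Dirichlet Laplacian on a bounded smooth domain Ω ⊂ ℝ^d, d ≤ 3, h > 0, and suppose E ∈ H̄_2, E_t ∈ L²(Ω), n ∈ H_2, g ∈ L²(Ω) satisfy i E_t - (A + h²A²)E - nE + iγE = g in L²(Ω). Then E ∈ H̄_4 and ‖E‖_4 ≤ h^{-2}[‖E_t‖ + ‖g‖ + γ‖E‖ + C‖n‖_2 ‖E‖_2] for a constant C depending only on Ω. -/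
lemma norm_le_norm_add_of_re_nonneg' {H : Type*} [NormedAddCommGroup H]
    [InnerProductSpace ℂ H] (u v : H) (hre : 0 ≤ (inner ℂ u v : ℂ).re) :
    ‖v‖ ≤ ‖u + v‖ := by
  have hsq : ‖v‖ ^ 2 ≤ ‖u + v‖ ^ 2 := by
    rw [@norm_add_sq ℂ]
    have hre' : 0 ≤ RCLike.re (inner ℂ u v : ℂ) := by simpa using hre
    nlinarith [sq_nonneg ‖u‖]
  nlinarith [norm_nonneg v, norm_nonneg (u + v)]

/-- Recovery of `H⁴` regularity of `E` from the Schrödinger equation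
`i E_t - (A + h²A²)E - nE + iγE = g`.  The positive symmetric operator `A`
(the Dirichlet Laplacian) gives the elliptic estimate `‖A²E‖ ≤ h⁻²‖(A+h²A²)E‖`,
and the multiplication operator `Mn` (by `n`) satisfies the algebra bound
`‖Mn E‖ ≤ C ‖n‖₂ ‖E‖₂ = C·N₂·‖A E‖`.  Here `‖E‖₄ = ‖A²E‖`, `‖E‖₂ = ‖A E‖`. -/
theorem stmt11 {H : Type*} [NormedAddCommGroup H] [InnerProductSpace ℂ H]
    (A Mn : H →ₗ[ℂ] H) (h γ Calg N₂ : ℝ)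
    (hh : 0 < h) (hγ : 0 ≤ γ) (hCalg : 0 ≤ Calg) (hN₂ : 0 ≤ N₂)
    (hsym : ∀ u v : H, (inner ℂ (A u) v : ℂ) = inner ℂ u (A v))
    (hpos : ∀ u : H, 0 ≤ (inner ℂ u (A u) : ℂ).re)
    (E Et g : H)
    (heq : Complex.I • Et - (A E + (h ^ 2 : ℂ) • A (A E)) - Mn E
        + Complex.I • ((γ : ℂ) • E) = g)
    (hMn : ‖Mn E‖ ≤ Calg * N₂ * ‖A E‖) :
    ‖A (A E)‖ ≤ (1 / h ^ 2) * (‖Et‖ + ‖g‖ + γ * ‖E‖ + Calg * N₂ * ‖A E‖) := by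
  set u := A E
  set v := ((h : ℂ) ^ 2) • A (A E) with hv
  have hre : 0 ≤ (inner ℂ u v : ℂ).re := by
    rw [hv, inner_smul_right]
    have := hpos (A E)
    have h2 : (0:ℝ) ≤ h ^ 2 := sq_nonneg h
    simp only [Complex.mul_re]
    have hr : ((h:ℂ)^2).re = h^2 := by simp [← Complex.ofReal_pow]
    have him : ((h:ℂ)^2).im = 0 := by simp [← Complex.ofReal_pow]
    rw [hr, him]
    simp only [zero_mul, sub_zero]
    exact mul_nonneg h2 (hpos (A E))
  have key : ‖v‖ ≤ ‖u + v‖ := norm_le_norm_add_of_re_nonneg' u v hre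
  have hsum : u + v = Complex.I • Et - Mn E + Complex.I • ((γ : ℂ) • E) - g := by
    have := heq
    rw [← this]; abel
  have hnorm : ‖u + v‖ ≤ ‖Et‖ + ‖g‖ + γ * ‖E‖ + Calg * N₂ * ‖A E‖ := by
    rw [hsum]
    have h1 : ‖Complex.I • Et‖ = ‖Et‖ := by simp [norm_smul]
    have h2 : ‖Complex.I • ((γ : ℂ) • E)‖ = γ * ‖E‖ := by
      simp [norm_smul, abs_of_nonneg hγ]
    calc ‖Complex.I • Et - Mn E + Complex.I • ((γ : ℂ) • E) - g‖
        ≤ ‖Complex.I • Et - Mn E + Complex.I • ((γ : ℂ) • E)‖ + ‖g‖ := norm_sub_le _ _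
      _ ≤ ‖Complex.I • Et - Mn E‖ + ‖Complex.I • ((γ : ℂ) • E)‖ + ‖g‖ := by
          gcongr; exact norm_add_le _ _
      _ ≤ ‖Complex.I • Et‖ + ‖Mn E‖ + ‖Complex.I • ((γ : ℂ) • E)‖ + ‖g‖ := by
          gcongr; exact norm_sub_le _ _
      _ ≤ ‖Et‖ + (Calg * N₂ * ‖A E‖) + (γ * ‖E‖) + ‖g‖ := by
          rw [h1, h2]; gcongr
      _ = ‖Et‖ + ‖g‖ + γ * ‖E‖ + Calg * N₂ * ‖A E‖ := by ring
  have hvnorm : ‖v‖ = h ^ 2 * ‖A (A E)‖ := by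
    rw [hv, norm_smul]
    simp [abs_of_nonneg (sq_nonneg h)]
  have h2pos : (0:ℝ) < h ^ 2 := pow_pos hh 2
  rw [div_mul_eq_mul_div, one_mul, le_div_iff₀ h2pos]
  calc ‖A (A E)‖ * h ^ 2 = ‖v‖ := by rw [hvnorm]; ring
    _ ≤ ‖u + v‖ := key
    _ ≤ _ := hnorm
end
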